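/- Oscillatory power-law integral: for α ∈ (0,1) and k > 0, the improper integral ∫_0^∞ s^{−α} exp(−i k s) ds converges, i.e. lim_{R→∞} ∫_0^R s^{−α} exp(−i k s) ds exists, and equals Γ(1−α) · k^{α−1} · exp(−i π (1−α)/2). -/

import Mathlib

open MeasureTheory intervalIntegral Filter Topology

section Stmt11Aux
open Set Real Complex

noncomputable def f11 (α k : ℝ) (z : ℂ) : ℂ :=
  Complex.exp ((1 - (α:ℂ)) * z) * Complex.exp (-(Complex.I * k * Complex.exp z))

lemma f11_diff (α k : ℝ) : Differentiable ℂ (f11 α k) := by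
  unfold f11
  fun_prop

lemma norm_f11 (α k x y : ℝ) :
    ‖f11 α k (x + y * Complex.I)‖ =
      Real.exp ((1 - α) * x + k * Real.exp x * Real.sin y) := by
  unfold f11
  rw [norm_mul, Complex.norm_exp, Complex.norm_exp,
    ← Real.exp_add]
  congr 1
  simp [Complex.exp_re, Complex.exp_im, Complex.add_re, Complex.add_im, Complex.mul_re,
    Complex.mul_im]
  ring

noncomputable def E11 (α k : ℝ) (x : ℝ) : ℂ :=
  Complex.I • ∫ y in (-(Real.pi / 2))..(0:ℝ), f11 α k (x + y * Complex.I)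

lemma E11_bound1 (α k : ℝ) (hk : 0 < k) (x : ℝ) :
    ‖E11 α k x‖ ≤ Real.pi / 2 * Real.exp ((1 - α) * x) := by
  unfold E11
  rw [norm_smul, Complex.norm_I, one_mul]
  have h := intervalIntegral.norm_integral_le_of_norm_le_const
      (a := -(Real.pi/2)) (b := 0) (C := Real.exp ((1 - α) * x))
      (f := fun y : ℝ => f11 α k (x + y * Complex.I)) ?_
  · calc _ ≤ Real.exp ((1-α)*x) * |0 - -(Real.pi/2)| := h
    _ = Real.pi / 2 * Real.exp ((1-α)*x) := by
        have h2 : |(0:ℝ) - -(Real.pi/2)| = Real.pi/2 := by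
          rw [zero_sub, neg_neg, _root_.abs_of_nonneg (by positivity : (0:ℝ) ≤ Real.pi/2)]
        rw [h2]; ring
  · intro y hy
    rw [Set.uIoc_of_le (by linarith [Real.pi_pos])] at hy
    rw [norm_f11]
    apply Real.exp_le_exp.2
    have hsin : Real.sin y ≤ 0 :=
      Real.sin_nonpos_of_nonpos_of_neg_pi_le hy.2 (by nlinarith [Real.pi_pos, hy.1.le])
    nlinarith [Real.exp_pos x, hk, mul_nonneg hk.le (Real.exp_pos x).le]

lemma E11_bound2 (α k : ℝ) (hk : 0 < k) (x : ℝ) :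
    ‖E11 α k x‖ ≤ Real.pi / (2 * k) * Real.exp (-α * x) := by
  have hπ := Real.pi_pos
  set c : ℝ := 2 * k * Real.exp x / Real.pi with hc
  have hcpos : 0 < c := by positivity
  unfold E11
  rw [norm_smul, Complex.norm_I, one_mul]
  have hcont : Continuous fun y : ℝ => f11 α k (x + y * Complex.I) :=
    (f11_diff α k).continuous.comp (by continuity)
  have h1 : ‖∫ y in (-(Real.pi/2))..0, f11 α k (x + y*Complex.I)‖ ≤
      ∫ y in (-(Real.pi/2))..0, ‖f11 α k (x + y*Complex.I)‖ :=
    intervalIntegral.norm_integral_le_integral_norm (by linarith)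
  have h2 : ∫ y in (-(Real.pi/2))..0, ‖f11 α k (x + y*Complex.I)‖ ≤
      ∫ y in (-(Real.pi/2))..0, Real.exp ((1-α)*x) * Real.exp (c*y) := by
    apply intervalIntegral.integral_mono_on (by linarith)
    · exact hcont.norm.intervalIntegrable _ _
    · exact (continuous_const.mul (Real.continuous_exp.comp
        (continuous_const.mul continuous_id))).intervalIntegrable _ _
    · intro y hy
      rw [norm_f11, ← Real.exp_add]
      apply Real.exp_le_exp.2
      have hs := Real.sin_le_mul hy.1 hy.2
      have h3 : k * Real.exp x * Real.sin y ≤ k * Real.exp x * (2/Real.pi * y) :=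
        mul_le_mul_of_nonneg_left hs (by positivity)
      have h4 : k * Real.exp x * (2/Real.pi*y) = c*y := by rw [hc]; field_simp
      linarith
  have h3 : ∫ y in (-(Real.pi/2))..0, Real.exp (c*y) = (1 - Real.exp (c * -(Real.pi/2))) / c := by
    rw [intervalIntegral.integral_comp_mul_left (fun u => Real.exp u) hcpos.ne']
    rw [integral_exp]
    simp only [mul_zero, Real.exp_zero, smul_eq_mul]
    ring
  calc ‖∫ y in (-(Real.pi/2))..0, f11 α k (x + y*Complex.I)‖
      ≤ ∫ y in (-(Real.pi/2))..0, Real.exp ((1-α)*x) * Real.exp (c*y) := le_trans h1 h2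
    _ = Real.exp ((1-α)*x) * ((1 - Real.exp (c * -(Real.pi/2))) / c) := by
        rw [intervalIntegral.integral_const_mul, h3]
    _ ≤ Real.exp ((1-α)*x) * (1 / c) := by
        apply mul_le_mul_of_nonneg_left _ (Real.exp_pos _).le
        rw [div_le_div_iff_of_pos_right hcpos]
        linarith [Real.exp_pos (c * -(Real.pi/2))]
    _ = Real.pi / (2 * k) * Real.exp (-α * x) := by
        rw [show -α*x = (1-α)*x - x by ring, Real.exp_sub, hc]
        field_simp

lemma rect11 (α k L X : ℝ) :
    ∫ x in L..X, f11 α k x =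
      (∫ x in L..X, f11 α k (x + (-(Real.pi/2) : ℝ) * Complex.I))
        + E11 α k X - E11 α k L := by
  have h := Complex.integral_boundary_rect_eq_zero_of_differentiableOn (f11 α k)
      ⟨L, -(Real.pi/2)⟩ ⟨X, 0⟩ ((f11_diff α k).differentiableOn)
  simp only [Complex.ofReal_zero, zero_mul, add_zero] at h
  unfold E11
  have h2 : (∫ x in L..X, f11 α k (x + ((0:ℝ)) * Complex.I)) = ∫ x in L..X, f11 α k x := by
    refine intervalIntegral.integral_congr fun x _ => ?_
    norm_num
  simp only [smul_eq_mul] at h ⊢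
  linear_combination -h

lemma P0 (α x : ℝ) :
    Complex.exp ((1 - (α:ℂ)) * x) = ((Real.exp x * Real.exp (x * -α) : ℝ) : ℂ) := by
  rw [← Real.exp_add, Complex.ofReal_exp]
  congr 1
  push_cast
  ring

lemma P1 (α k x : ℝ) :
    f11 α k x = Real.exp x •
      (((Real.exp x ^ (-α) : ℝ) : ℂ) * Complex.exp (-(Complex.I * k * Real.exp x))) := by
  unfold f11
  rw [Complex.real_smul, Real.rpow_def_of_pos (Real.exp_pos x), Real.log_exp, P0,
    ← mul_assoc, ← Complex.ofReal_mul]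
  congr 2
  rw [← Complex.ofReal_exp]

lemma P2 (α k x : ℝ) :
    f11 α k (x + (-(Real.pi/2) : ℝ) * Complex.I) =
      Complex.exp (-(Complex.I * Real.pi * (1 - (α:ℂ)) / 2)) *
        (Real.exp x • (((Real.exp x ^ (-α) : ℝ) : ℂ) * Complex.exp (-((k:ℂ) * Real.exp x)))) := by
  unfold f11
  have he : Complex.exp (↑x + ↑(-(Real.pi/2)) * Complex.I) = ↑(Real.exp x) * (-Complex.I) := by
    rw [Complex.exp_add, ← Complex.ofReal_exp]
    congr 1
    rw [Complex.exp_mul_I, ← Complex.ofReal_cos, ← Complex.ofReal_sin]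
    norm_num
  rw [he]
  have h2 : -(Complex.I * ↑k * (↑(Real.exp x) * -Complex.I)) = -((k:ℂ) * ↑(Real.exp x)) := by
    have h3 : Complex.I * Complex.I = -1 := Complex.I_mul_I
    linear_combination ((k:ℂ) * ↑(Real.exp x)) * h3
  rw [h2]
  rw [show ((1:ℂ)-(α:ℂ)) * (↑x + ↑(-(Real.pi/2))*Complex.I)
      = (-(Complex.I * Real.pi * (1 - (α:ℂ)) / 2)) + (1-(α:ℂ)) * (x:ℂ) by push_cast; ring,
    Complex.exp_add]
  rw [Complex.real_smul, Real.rpow_def_of_pos (Real.exp_pos x), Real.log_exp, P0]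
  push_cast
  ring

lemma subst11 (g : ℝ → ℂ) (hg : ContinuousOn g (Set.Ioi 0)) (L X : ℝ) :
    ∫ x in L..X, Real.exp x • g (Real.exp x) = ∫ s in Real.exp L..Real.exp X, g s := by
  have himg : Real.exp '' Set.uIcc L X ⊆ Set.Ioi 0 := by
    rintro s ⟨t, -, rfl⟩
    exact Real.exp_pos t
  have h := intervalIntegral.integral_comp_smul_deriv' (f := Real.exp) (f' := Real.exp)
    (g := g) (a := L) (b := X) (fun x _ => Real.hasDerivAt_exp x)
    Real.continuous_exp.continuousOn (hg.mono himg)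
  simpa [Function.comp] using h

end Stmt11Aux

/-- the improper oscillatory power-law integral
`∫₀^∞ s^{−α} e^{−iks} ds` converges (as the limit of `∫₀^R` as `R → ∞`) and equals
`Γ(1−α) k^{α−1} exp(−iπ(1−α)/2)`. -/
theorem stmt_11 (α k : ℝ) (hα : α ∈ Set.Ioo (0 : ℝ) 1) (hk : 0 < k) :
    Tendsto
      (fun R : ℝ => ∫ s in (0 : ℝ)..R, ((s ^ (-α) : ℝ) : ℂ) *
        Complex.exp (-(Complex.I * k * s)))
      atTop
      (𝓝 (((Real.Gamma (1 - α) * k ^ (α - 1) : ℝ) : ℂ) *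
        Complex.exp (-(Complex.I * Real.pi * (1 - α) / 2)))) := by
  obtain ⟨hα0, hα1⟩ := hα
  set F : ℝ → ℂ := fun s => ((s ^ (-α) : ℝ) : ℂ) * Complex.exp (-(Complex.I * k * s)) with hFdef
  set G : ℝ → ℂ := fun s => ((s ^ (-α) : ℝ) : ℂ) * Complex.exp (-((k:ℂ) * s)) with hGdef
  set C : ℂ := Complex.exp (-(Complex.I * Real.pi * (1 - (α:ℂ)) / 2)) with hCdef
  set V : ℂ := ((Real.Gamma (1 - α) * k ^ (α - 1) : ℝ) : ℂ) with hVdef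
  -- continuity
  have hrpc : ContinuousOn (fun s : ℝ => ((s ^ (-α) : ℝ) : ℂ)) (Set.Ioi 0) :=
    Complex.continuous_ofReal.comp_continuousOn
      (ContinuousOn.rpow_const continuousOn_id (fun x hx => Or.inl (ne_of_gt hx)))
  have hFc : ContinuousOn F (Set.Ioi 0) := by
    apply hrpc.mul (Continuous.continuousOn (by fun_prop))
  have hGc : ContinuousOn G (Set.Ioi 0) := by
    apply hrpc.mul (Continuous.continuousOn (by fun_prop))
  -- norms
  have hFnorm : ∀ s : ℝ, ‖F s‖ = |s ^ (-α)| := by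
    intro s
    rw [hFdef]
    simp only [norm_mul, Complex.norm_exp, Complex.norm_real, Real.norm_eq_abs]
    have : (-(Complex.I * k * s)).re = 0 := by simp
    rw [this, Real.exp_zero, mul_one]
  have hGnorm : ∀ s : ℝ, ‖G s‖ = |s ^ (-α)| * Real.exp (-(k * s)) := by
    intro s
    rw [hGdef]
    simp only [norm_mul, Complex.norm_exp, Complex.norm_real, Real.norm_eq_abs]
    norm_num
  -- interval integrability on [0, T]
  have hrpow_ioc : ∀ T : ℝ, IntegrableOn (fun s : ℝ => s ^ (-α)) (Set.Ioc 0 T) := by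
    intro T
    have h := intervalIntegrable_rpow' (a := 0) (b := T) (show (-1:ℝ) < -α by linarith)
    rw [intervalIntegrable_iff] at h
    exact h.mono_set (Set.Ioc_subset_Ioc (min_le_left _ _) (le_max_right _ _))
  have hmeas : ∀ (H : ℝ → ℂ), ContinuousOn H (Set.Ioi 0) → ∀ T : ℝ,
      AEStronglyMeasurable H (volume.restrict (Set.Ioc 0 T)) := fun H hH T =>
    (hH.mono Set.Ioc_subset_Ioi_self).aestronglyMeasurable measurableSet_Ioc
  have hFT : ∀ T : ℝ, IntegrableOn F (Set.Ioc 0 T) := by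
    intro T
    refine Integrable.mono (hrpow_ioc T) (hmeas F hFc T) ?_
    filter_upwards with s
    rw [hFnorm s, Real.norm_eq_abs]
  have hGT : ∀ T : ℝ, IntegrableOn G (Set.Ioc 0 T) := by
    intro T
    refine Integrable.mono (hrpow_ioc T) (hmeas G hGc T) ?_
    filter_upwards [ae_restrict_mem measurableSet_Ioc] with s hs
    rw [hGnorm s, Real.norm_eq_abs]
    have h1 : Real.exp (-(k*s)) ≤ 1 := by
      rw [Real.exp_le_one_iff]
      nlinarith [hs.1]
    nlinarith [abs_nonneg (s ^ (-α))]
  have hIab : ∀ (H : ℝ → ℂ), (∀ T, IntegrableOn H (Set.Ioc 0 T)) →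
      ∀ a b : ℝ, 0 ≤ a → 0 ≤ b → IntervalIntegrable H volume a b := by
    intro H hH a b ha hb
    rw [intervalIntegrable_iff]
    exact (hH (max a b)).mono_set (Set.Ioc_subset_Ioc (le_min ha hb) le_rfl)
  -- G integrable on Ioi 0
  have hGIoi : IntegrableOn G (Set.Ioi 0) := by
    have h1 : IntegrableOn G (Set.Ioc 0 1) := hGT 1
    have h2 : IntegrableOn G (Set.Ioi 1) := by
      refine Integrable.mono (exp_neg_integrableOn_Ioi 1 hk)
        ((hGc.mono (Set.Ioi_subset_Ioi (zero_le_one : (0:ℝ) ≤ 1))).aestronglyMeasurable measurableSet_Ioi) ?_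
      filter_upwards [ae_restrict_mem measurableSet_Ioi] with s hs
      have hs1 : (1:ℝ) ≤ s := le_of_lt hs
      rw [hGnorm s, Real.norm_eq_abs]
      have h3 : |s ^ (-α)| ≤ 1 := by
        rw [_root_.abs_of_nonneg (Real.rpow_nonneg (by linarith) _)]
        exact Real.rpow_le_one_of_one_le_of_nonpos hs1 (by linarith)
      have h4 : Real.exp (-(k*s)) = Real.exp (-k*s) := by ring_nf
      rw [h4]
      have h5 : (0:ℝ) ≤ Real.exp (-k*s) := (Real.exp_pos _).le
      calc |s ^ (-α)| * Real.exp (-k*s) ≤ 1 * Real.exp (-k*s) :=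
            mul_le_mul_of_nonneg_right h3 h5
        _ = Real.exp (-k*s) := one_mul _
        _ ≤ |Real.exp (-k*s)| := le_abs_self _
    have := h1.union h2
    rwa [Set.Ioc_union_Ioi_eq_Ioi (zero_le_one : (0:ℝ) ≤ 1)] at this
  -- value of the Gamma integral
  have hGval : ∫ s in Set.Ioi (0:ℝ), G s = V := by
    have ha : (0:ℝ) < (1 - (α:ℂ)).re := by
      simp only [Complex.sub_re, Complex.one_re, Complex.ofReal_re]
      linarith
    have h := Complex.integral_cpow_mul_exp_neg_mul_Ioi ha hk
    have h2 : ∫ (t : ℝ) in Set.Ioi 0, (t:ℂ) ^ ((1 - (α:ℂ)) - 1) * Complex.exp (-(k * t))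
        = ∫ s in Set.Ioi (0:ℝ), G s := by
      refine setIntegral_congr_fun measurableSet_Ioi fun t ht => ?_
      simp only [hGdef]
      have h4 : ((t ^ (-α) : ℝ) : ℂ) = (t:ℂ) ^ ((-α : ℝ) : ℂ) :=
        Complex.ofReal_cpow (le_of_lt ht) (-α)
      rw [h4]
      congr 2
      push_cast
      ring
    rw [h2] at h
    rw [h, hVdef]
    have h3 : ((1:ℂ) / k) ^ (1 - (α:ℂ)) = ((k ^ (α - 1) : ℝ) : ℂ) := by
      have e1 : ((1:ℂ) / k) = (((1/k : ℝ)) : ℂ) := by push_cast; ring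
      have e2 : (1 - (α:ℂ)) = (((1 - α : ℝ)) : ℂ) := by push_cast; ring
      rw [e1, e2, ← Complex.ofReal_cpow (by positivity) (1 - α)]
      congr 1
      rw [one_div, Real.inv_rpow hk.le, ← Real.rpow_neg hk.le]
      congr 1
      ring
    rw [h3, show (1 - (α:ℂ)) = (((1 - α : ℝ)) : ℂ) by push_cast; ring, Complex.Gamma_ofReal]
    push_cast
    ring
  -- pointwise norm bounds
  have hFbound : ∀ s : ℝ, 0 ≤ s → ‖F s‖ ≤ |s ^ (-α)| := fun s _ => le_of_eq (hFnorm s)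
  have hGbound : ∀ s : ℝ, 0 ≤ s → ‖G s‖ ≤ |s ^ (-α)| := by
    intro s hs
    rw [hGnorm s]
    have h1 : Real.exp (-(k*s)) ≤ 1 := by
      rw [Real.exp_le_one_iff]
      nlinarith
    nlinarith [abs_nonneg (s ^ (-α))]
  -- rpow tendsto zero
  have hrpow0 : Tendsto (fun a : ℝ => a ^ (1-α)) (𝓝[>] 0) (𝓝 0) := by
    have hc : ContinuousAt (fun x : ℝ => x ^ (1-α)) 0 :=
      Real.continuousAt_rpow_const 0 (1-α) (Or.inr (by linarith))
    have h0 : (0:ℝ) ^ (1-α) = 0 := Real.zero_rpow (by linarith)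
    have := hc.tendsto.mono_left (nhdsWithin_le_nhds (s := Set.Ioi (0:ℝ)))
    rwa [h0] at this
  have hzero : Tendsto (fun a : ℝ => a ^ (1-α) / (1-α)) (𝓝[>] 0) (𝓝 0) := by
    have := hrpow0.div_const (1-α)
    rwa [zero_div] at this
  -- small interval integrals tend to zero
  have hsmall : ∀ (H : ℝ → ℂ), (∀ s, 0 ≤ s → ‖H s‖ ≤ |s ^ (-α)|) →
      (∀ a b : ℝ, 0 ≤ a → 0 ≤ b → IntervalIntegrable H volume a b) →
      Tendsto (fun a => ∫ s in (0:ℝ)..a, H s) (𝓝[>] 0) (𝓝 0) := by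
    intro H hb hint
    apply squeeze_zero_norm' ?_ hzero
    filter_upwards [self_mem_nhdsWithin] with a (ha : 0 < a)
    have hrint : IntervalIntegrable (fun s : ℝ => |s ^ (-α)|) volume 0 a :=
      (intervalIntegrable_rpow' (show (-1:ℝ) < -α by linarith)).norm
    calc ‖∫ s in (0:ℝ)..a, H s‖ ≤ |∫ s in (0:ℝ)..a, ‖H s‖| :=
          intervalIntegral.norm_integral_le_abs_integral_norm
      _ = ∫ s in (0:ℝ)..a, ‖H s‖ := by
          rw [_root_.abs_of_nonneg]
          apply intervalIntegral.integral_nonneg ha.le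
          intro s _
          exact norm_nonneg _
      _ ≤ ∫ s in (0:ℝ)..a, |s ^ (-α)| := by
          apply intervalIntegral.integral_mono_on ha.le (hint 0 a le_rfl ha.le).norm hrint
          intro s hs
          exact hb s hs.1
      _ = ∫ s in (0:ℝ)..a, s ^ (-α) := by
          apply intervalIntegral.integral_congr
          intro s hs
          rw [Set.uIcc_of_le ha.le] at hs
          exact _root_.abs_of_nonneg (Real.rpow_nonneg hs.1 _)
      _ = a ^ (1-α) / (1-α) := by
          rw [integral_rpow (Or.inl (by linarith : (-1:ℝ) < -α))]
          rw [Real.zero_rpow (show -α + 1 ≠ 0 by intro h; apply absurd h; intro h2; nlinarith)]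
          rw [show -α + 1 = 1-α by ring, sub_zero]
  -- key identity
  have hkey : ∀ R : ℝ, 0 < R →
      ∫ s in (0:ℝ)..R, F s = C * (∫ s in (0:ℝ)..R, G s) + E11 α k (Real.log R) := by
    intro R hR
    have hsplit : ∀ (H : ℝ → ℂ), (∀ a b : ℝ, 0 ≤ a → 0 ≤ b → IntervalIntegrable H volume a b) →
        ∀ᶠ a in 𝓝[>] (0:ℝ), ∫ s in a..R, H s
          = (∫ s in (0:ℝ)..R, H s) - ∫ s in (0:ℝ)..a, H s := by
      intro H hint
      filter_upwards [self_mem_nhdsWithin] with a (ha : 0 < a)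
      have h := intervalIntegral.integral_add_adjacent_intervals
        (hint 0 a le_rfl ha.le) (hint a R ha.le hR.le)
      rw [eq_sub_iff_add_eq, add_comm]
      exact h
    have hFten : Tendsto (fun a : ℝ => ∫ s in a..R, F s) (𝓝[>] 0)
        (𝓝 (∫ s in (0:ℝ)..R, F s)) := by
      have h := (tendsto_const_nhds (x := (∫ s in (0:ℝ)..R, F s))
        (f := 𝓝[>] (0:ℝ))).sub (hsmall F hFbound (hIab F hFT))
      rw [sub_zero] at h
      exact Tendsto.congr' ((hsplit F (hIab F hFT)).mono fun _ h2 => h2.symm) h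
    have hGten : Tendsto (fun a : ℝ => ∫ s in a..R, G s) (𝓝[>] 0)
        (𝓝 (∫ s in (0:ℝ)..R, G s)) := by
      have h := (tendsto_const_nhds (x := (∫ s in (0:ℝ)..R, G s))
        (f := 𝓝[>] (0:ℝ))).sub (hsmall G hGbound (hIab G hGT))
      rw [sub_zero] at h
      exact Tendsto.congr' ((hsplit G (hIab G hGT)).mono fun _ h2 => h2.symm) h
    have hEten : Tendsto (fun a : ℝ => E11 α k (Real.log a)) (𝓝[>] 0) (𝓝 0) := by
      apply squeeze_zero_norm' (a := fun a : ℝ => Real.pi/2 * a ^ (1-α)) ?_ ?_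
      · filter_upwards [self_mem_nhdsWithin] with a (ha : 0 < a)
        calc ‖E11 α k (Real.log a)‖ ≤ Real.pi/2 * Real.exp ((1-α) * Real.log a) :=
              E11_bound1 α k hk _
          _ = Real.pi/2 * a ^ (1-α) := by
              rw [Real.rpow_def_of_pos ha, mul_comm (Real.log a)]
      · have := hrpow0.const_mul (Real.pi/2)
        rwa [mul_zero] at this
    have hEq : ∀ᶠ a in 𝓝[>] (0:ℝ), ∫ s in a..R, F s
        = C * (∫ s in a..R, G s) + E11 α k (Real.log R) - E11 α k (Real.log a) := by
      filter_upwards [self_mem_nhdsWithin] with a (ha : 0 < a)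
      have hLa := Real.exp_log ha
      have hLR := Real.exp_log hR
      have t1 : ∫ x in Real.log a..Real.log R, f11 α k x = ∫ s in a..R, F s := by
        rw [intervalIntegral.integral_congr
            (g := fun x : ℝ => Real.exp x • F (Real.exp x)) (fun x _ => P1 α k x),
          subst11 F hFc, hLa, hLR]
      have t2 : ∫ x in Real.log a..Real.log R,
          f11 α k (x + (-(Real.pi/2) : ℝ) * Complex.I) = C * (∫ s in a..R, G s) := by
        rw [intervalIntegral.integral_congr
            (g := fun x : ℝ => C * (Real.exp x • G (Real.exp x))) (fun x _ => P2 α k x),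
          intervalIntegral.integral_const_mul, subst11 G hGc, hLa, hLR]
      have h := rect11 α k (Real.log a) (Real.log R)
      rw [t1, t2] at h
      exact h
    have hRHS : Tendsto (fun a : ℝ => C * (∫ s in a..R, G s) + E11 α k (Real.log R)
        - E11 α k (Real.log a)) (𝓝[>] 0)
        (𝓝 (C * (∫ s in (0:ℝ)..R, G s) + E11 α k (Real.log R) - 0)) :=
      ((hGten.const_mul C).add_const (E11 α k (Real.log R))).sub hEten
    have := tendsto_nhds_unique hFten (Tendsto.congr' (hEq.mono fun _ h2 => h2.symm) hRHS)
    rwa [sub_zero] at this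
  -- final limits
  have hGlim : Tendsto (fun R : ℝ => ∫ s in (0:ℝ)..R, G s) atTop (𝓝 V) := by
    have := intervalIntegral_tendsto_integral_Ioi 0 hGIoi tendsto_id
    rwa [hGval] at this
  have hElim : Tendsto (fun R : ℝ => E11 α k (Real.log R)) atTop (𝓝 0) := by
    apply squeeze_zero_norm'
      (a := fun R : ℝ => Real.pi/(2*k) * Real.exp (-α * Real.log R)) ?_ ?_
    · filter_upwards with R
      exact E11_bound2 α k hk _
    · have h1 : Tendsto (fun R : ℝ => -α * Real.log R) atTop atBot := by
        rw [tendsto_const_mul_atBot_of_neg (by linarith : -α < 0)]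
        exact Real.tendsto_log_atTop
      have := (Real.tendsto_exp_atBot.comp h1).const_mul (Real.pi/(2*k))
      rwa [mul_zero] at this
  have hfinal : Tendsto (fun R : ℝ => C * (∫ s in (0:ℝ)..R, G s) + E11 α k (Real.log R))
      atTop (𝓝 (C * V + 0)) := (hGlim.const_mul C).add hElim
  rw [add_zero] at hfinal
  have heq : ∀ᶠ R in (atTop : Filter ℝ), C * (∫ s in (0:ℝ)..R, G s) + E11 α k (Real.log R)
      = ∫ s in (0:ℝ)..R, F s := by
    filter_upwards [eventually_gt_atTop (0:ℝ)] with R hR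
    exact (hkey R hR).symm
  have := Tendsto.congr' heq hfinal
  rwa [mul_comm] at this
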